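/- Suppose there exists λ̃ ∈ ℝ_+^{|𝒜|} and a classifier φ̃ with φ̃ ∈ argmin_φ F_{λ̃}(φ), such that R_k(φ̃) = α_k for all k ∈ 𝒜 (all NP constraints active). Then strong duality holds: sup_{λ∈ℝ_+^{|𝒜|}} inf_φ F_λ(φ) = inf_φ sup_{λ∈ℝ_+^{|𝒜|}} F_λ(φ), and φ̃ is optimal for the NPMC problem. -/
import Mathlib


open Set

/-- If some `λ̃ ≥ 0` admits a minimizer `φ̃` of `F_{λ̃}` with all NP constraints active
(`R_k(φ̃) = α_k` for `k ∈ 𝒜`), then strong duality holds and `φ̃` is NPMC-optimal. -/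
theorem stmt6 {Φ : Type*} {K : ℕ} (A : Finset (Fin K))
    (R : Φ → Fin K → ℝ) (hR : ∀ φ k, R φ k ∈ Set.Icc (0:ℝ) 1)
    (w α : Fin K → ℝ) (hw : ∀ k, 0 ≤ w k) (hα : ∀ k, α k ∈ Set.Ico (0:ℝ) 1)
    (J : Φ → ℝ) (hJ : ∀ φ, J φ = ∑ k, w k * R φ k)
    (F : (Fin K → ℝ) → Φ → ℝ)
    (hF : ∀ l φ, F l φ = ∑ k ∈ A, l k * (R φ k - α k) + J φ)
    (ltil : Fin K → ℝ) (hltil : ∀ k, 0 ≤ ltil k)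
    (φtil : Φ) (hmin : ∀ φ : Φ, F ltil φtil ≤ F ltil φ)
    (hactive : ∀ k ∈ A, R φtil k = α k) :
    ((⨆ l ∈ {l : Fin K → ℝ | ∀ k, 0 ≤ l k}, ⨅ φ : Φ, (F l φ : EReal))
        = ⨅ φ : Φ, ⨆ l ∈ {l : Fin K → ℝ | ∀ k, 0 ≤ l k}, (F l φ : EReal))
    ∧ (∀ k ∈ A, R φtil k ≤ α k)
    ∧ ∀ φ : Φ, (∀ k ∈ A, R φ k ≤ α k) → J φtil ≤ J φ := by
  -- For any l, F l φtil = J φtil since all constraints are active.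
  have hFtil : ∀ l : Fin K → ℝ, F l φtil = J φtil := by
    intro l
    rw [hF]
    have : ∑ k ∈ A, l k * (R φtil k - α k) = 0 := by
      apply Finset.sum_eq_zero
      intro k hk
      rw [hactive k hk]
      ring
    rw [this]; ring
  -- Feasibility of φtil implies F ltil φ ≤ J φ for feasible φ.
  have hopt : ∀ φ : Φ, (∀ k ∈ A, R φ k ≤ α k) → J φtil ≤ J φ := by
    intro φ hfeas
    have h1 : J φtil ≤ F ltil φ := by
      rw [← hFtil ltil]; exact hmin φ
    have h2 : F ltil φ ≤ J φ := by
      rw [hF]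
      have : ∑ k ∈ A, ltil k * (R φ k - α k) ≤ 0 := by
        apply Finset.sum_nonpos
        intro k hk
        exact mul_nonpos_of_nonneg_of_nonpos (hltil k) (by linarith [hfeas k hk])
      linarith
    linarith
  refine ⟨?_, fun k hk => (hactive k hk).le, hopt⟩
  -- strong duality
  have hA : ((J φtil : ℝ) : EReal) ≤
      ⨆ l ∈ {l : Fin K → ℝ | ∀ k, 0 ≤ l k}, ⨅ φ : Φ, (F l φ : EReal) := by
    refine le_iSup₂_of_le ltil hltil ?_
    refine le_iInf fun φ => ?_
    exact_mod_cast (by rw [← hFtil ltil]; exact hmin φ : J φtil ≤ F ltil φ)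
  have hB : (⨅ φ : Φ, ⨆ l ∈ {l : Fin K → ℝ | ∀ k, 0 ≤ l k}, (F l φ : EReal))
      ≤ ((J φtil : ℝ) : EReal) := by
    refine (iInf_le _ φtil).trans ?_
    refine iSup₂_le fun l hl => ?_
    exact_mod_cast (hFtil l).le
  have hweak : (⨆ l ∈ {l : Fin K → ℝ | ∀ k, 0 ≤ l k}, ⨅ φ : Φ, (F l φ : EReal))
      ≤ ⨅ φ : Φ, ⨆ l ∈ {l : Fin K → ℝ | ∀ k, 0 ≤ l k}, (F l φ : EReal) := by
    refine iSup₂_le fun l hl => le_iInf fun φ => ?_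
    exact (iInf_le _ φ).trans (le_iSup₂_of_le l hl le_rfl)
  exact le_antisymm hweak (hB.trans hA)
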